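/- Let K be a field of characteristic p > 0 and let Z ∈ K[[X_1, …, X_n]] be a formal power series of degree less than p in each variable X_i (i.e., a polynomial with each exponent of each variable at most p−1). If Z lies in the ideal generated by Y_1^p for some regular system of parameters Y_1, …, Y_n of K[[X_1, …, X_n]], and Z ≠ 0 as a polynomial, then this yields a contradiction: no nonzero polynomial of degree < p in each X_i lies in B·Y_1^p where B = K[[Y_1,…,Y_n]] = K[[X_1,…,X_n]]. -/

import Mathlib

section Aux

variable {K : Type*} [Field K] {p : ℕ} [Fact p.Prime] [CharP K p] {σ : Type*}

private lemma monomial_pow' (d : σ →₀ ℕ) (c : K) (k : ℕ) :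
    (MvPowerSeries.monomial d c) ^ k = MvPowerSeries.monomial (k • d) (c ^ k) := by
  induction k with
  | zero => simp [MvPowerSeries.monomial_zero_one]
  | succ k ih =>
      rw [pow_succ, ih, MvPowerSeries.monomial_mul_monomial, ← pow_succ, succ_nsmul]

private instance charP_mvPowerSeries : CharP (MvPowerSeries σ K) p :=
  charP_of_injective_ringHom
    (f := MvPowerSeries.C)
    (fun a b h => by
      simpa using congrArg (MvPowerSeries.constantCoeff) h) p

/-- In characteristic `p`, the coefficient of `Y ^ p` at an index not divisible by `p`
(componentwise) vanishes. -/
private lemma coeff_pow_p_eq_zero [DecidableEq σ] (Y : MvPowerSeries σ K) (d : σ →₀ ℕ)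
    (h : ∀ M : σ →₀ ℕ, p • M ≠ d) :
    MvPowerSeries.coeff d (Y ^ p) = 0 := by
  classical
  have hp : 0 < p := (Fact.out : p.Prime).pos
  set Q : MvPowerSeries σ K :=
    ∑ d' ∈ Finset.Iic d, MvPowerSeries.monomial d' (MvPowerSeries.coeff d' Y) with hQdef
  have hQc : ∀ d'' : σ →₀ ℕ, MvPowerSeries.coeff d'' Q
      = if d'' ≤ d then MvPowerSeries.coeff d'' Y else 0 := by
    intro d''
    rw [hQdef, map_sum]
    simp_rw [MvPowerSeries.coeff_monomial]
    rw [Finset.sum_ite_eq]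
    simp [Finset.mem_Iic]
  have hsplit : Y ^ p = Q ^ p + (Y - Q) ^ p := by
    rw [← add_pow_char]
    congr 1
    ring
  have hR : MvPowerSeries.coeff d ((Y - Q) ^ p) = 0 := by
    obtain ⟨k, hk⟩ : ∃ k, p = k + 1 := ⟨p - 1, (Nat.succ_pred_eq_of_pos hp).symm⟩
    rw [hk, pow_succ, MvPowerSeries.coeff_mul]
    apply Finset.sum_eq_zero
    intro x hx
    have hx2 : x.2 ≤ d := by
      rw [Finset.HasAntidiagonal.mem_antidiagonal] at hx
      exact hx ▸ le_add_self
    have hz : MvPowerSeries.coeff x.2 (Y - Q) = 0 := by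
      rw [map_sub, hQc, if_pos hx2, sub_self]
    rw [hz, mul_zero]
  have hQp : MvPowerSeries.coeff d (Q ^ p) = 0 := by
    rw [hQdef, sum_pow_char, map_sum]
    apply Finset.sum_eq_zero
    intro d' _
    rw [monomial_pow', MvPowerSeries.coeff_monomial,
      if_neg (fun hdd => h d' hdd.symm)]
  rw [hsplit, map_add, hQp, hR, add_zero]

end Aux

/-- Let `Y₁, …, Yₙ` be a regular system of parameters of `K[[X₁, …, Xₙ]]` (i.e. they
generate the maximal ideal), `char K = p > 0`.  Then no nonzero polynomial `Z` of
degree `< p` in each variable `Xᵢ` is divisible by `Yᵢ₀^p` in the power series ring. -/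
theorem stmt_15 (K : Type*) [Field K] (p : ℕ) [Fact p.Prime] [CharP K p]
    (n : ℕ) (Y : Fin n → MvPowerSeries (Fin n) K)
    (hY : Ideal.span (Set.range Y) =
      IsLocalRing.maximalIdeal (MvPowerSeries (Fin n) K))
    (i₀ : Fin n) (Z : MvPolynomial (Fin n) K) (hZ : Z ≠ 0)
    (hdeg : ∀ i : Fin n, Z.degreeOf i < p) :
    ¬ (Y i₀ ^ p ∣ (Z : MvPowerSeries (Fin n) K)) := by
  rintro ⟨W, hW⟩
  have hp : 0 < p := (Fact.out : p.Prime).pos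
  -- the constant coefficient of `Y i₀` is zero, since `Y i₀` lies in the maximal ideal
  have hmem : Y i₀ ∈ IsLocalRing.maximalIdeal (MvPowerSeries (Fin n) K) := by
    rw [← hY]
    exact Ideal.subset_span ⟨i₀, rfl⟩
  have hnu : ¬ IsUnit (Y i₀) := (IsLocalRing.mem_maximalIdeal _).mp hmem
  have hc0 : MvPowerSeries.constantCoeff (Y i₀) = 0 := by
    by_contra h0
    exact hnu (MvPowerSeries.isUnit_iff_constantCoeff.mpr (isUnit_iff_ne_zero.mpr h0))
  -- show `Z = 0`, a contradiction
  apply hZ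
  ext e
  rw [MvPolynomial.coeff_zero]
  by_contra he
  have hei : ∀ i, e i < p := fun i =>
    (MvPolynomial.degreeOf_lt_iff hp).mp (hdeg i) e (MvPolynomial.mem_support_iff.mpr he)
  apply he
  have hcoe : MvPolynomial.coeff e Z
      = MvPowerSeries.coeff e (Z : MvPowerSeries (Fin n) K) :=
    (MvPolynomial.coeff_coe Z e).symm
  rw [hcoe, hW, MvPowerSeries.coeff_mul]
  apply Finset.sum_eq_zero
  intro x hx
  rw [Finset.HasAntidiagonal.mem_antidiagonal] at hx
  rcases eq_or_ne x.1 0 with h1 | h1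
  · rw [h1]
    have hz : MvPowerSeries.coeff 0 (Y i₀ ^ p) = 0 := by
      rw [MvPowerSeries.coeff_zero_eq_constantCoeff, map_pow, hc0, zero_pow hp.ne']
    rw [hz, zero_mul]
  · have hzero : MvPowerSeries.coeff x.1 (Y i₀ ^ p) = 0 := by
      apply coeff_pow_p_eq_zero
      intro M hM
      apply h1
      ext i
      have h1i : x.1 i ≤ e i := by
        have h' := congrArg (fun f : Fin n →₀ ℕ => f i) hx
        simp only [Finsupp.add_apply] at h'
        omega
      have hMi : p * M i = x.1 i := by
        have h' := congrArg (fun f : Fin n →₀ ℕ => f i) hM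
        simpa [Finsupp.smul_apply] using h'
      have hep : e i < p := hei i
      have hM0 : M i = 0 := by
        by_contra hne
        have hle : p ≤ p * M i := Nat.le_mul_of_pos_right p (Nat.pos_of_ne_zero hne)
        rw [hMi] at hle
        omega
      simp only [Finsupp.coe_zero, Pi.zero_apply]
      rw [← hMi, hM0, mul_zero]
    rw [hzero, zero_mul]
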